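/- Let A be a real symmetric matrix with λ₁(A) = −λₙ(A) > 0. If u is a unit eigenvector of A² corresponding to λ₁(A)² that is not an eigenvector of A, and v := A u / ‖A u‖, then σ₁(A) u vᵀ is a best rank one approximation of A that is not symmetric. -/

import Mathlib

noncomputable section

/-- Frobenius norm of a real matrix. -/
def frob {m k : ℕ} (A : Matrix (Fin m) (Fin k) ℝ) : ℝ :=
  Real.sqrt (∑ i, ∑ j, A i j ^ 2)

/-- `v` is a unit vector. -/
def uvec {m : ℕ} (v : Fin m → ℝ) : Prop := ∑ i, v i ^ 2 = 1

/-- `B` is a best rank one approximation of `A` in the Frobenius norm. -/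
def IsBestRankOne {m : ℕ} (A B : Matrix (Fin m) (Fin m) ℝ) : Prop :=
  (∃ (s : ℝ) (x y : Fin m → ℝ), uvec x ∧ uvec y ∧ B = s • Matrix.vecMulVec x y) ∧
  ∀ (s : ℝ) (x y : Fin m → ℝ), uvec x → uvec y →
    frob (A - B) ≤ frob (A - s • Matrix.vecMulVec x y)

/-- The largest singular value of a real matrix `A`: the square root of the largest
eigenvalue of `AᵀA = AᴴA`. -/
def sigma1 {m : ℕ} (A : Matrix (Fin m) (Fin m) ℝ) : ℝ :=
  Real.sqrt (⨆ i, (Matrix.isHermitian_conjTranspose_mul_self A).eigenvalues i)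

open Matrix

section Aux
variable {n : ℕ}

/-- Parseval identity for the eigenbasis of a real symmetric matrix. -/
lemma my_parseval {M : Matrix (Fin (n+1)) (Fin (n+1)) ℝ} (hM : M.IsHermitian)
    (x z : Fin (n+1) → ℝ) :
    ∑ j, x j * z j
      = ∑ i, (∑ j, hM.eigenvectorBasis i j * x j) * (∑ j, hM.eigenvectorBasis i j * z j) := by
  have hUU : (hM.eigenvectorUnitary : Matrix (Fin (n+1)) (Fin (n+1)) ℝ)
      * star (hM.eigenvectorUnitary : Matrix (Fin (n+1)) (Fin (n+1)) ℝ) = 1 :=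
    Unitary.coe_mul_star_self _
  have hcomp : ∀ j k, ∑ i, hM.eigenvectorBasis i j * hM.eigenvectorBasis i k
      = if j = k then (1:ℝ) else 0 := by
    intro j k
    have := congrFun (congrFun hUU j) k
    simp only [Matrix.mul_apply, Matrix.one_apply, Matrix.star_apply, star_trivial,
      Matrix.IsHermitian.eigenvectorUnitary_apply] at this
    simpa using this
  calc ∑ j, x j * z j = ∑ j, ∑ k, (if j = k then (1:ℝ) else 0) * (x j * z k) := by
        apply Finset.sum_congr rfl; intro j _
        rw [Finset.sum_eq_single j]
        · simp
        · intro b _ hb; simp [Ne.symm hb]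
        · simp
    _ = ∑ j, ∑ k, ∑ i, hM.eigenvectorBasis i j * hM.eigenvectorBasis i k * (x j * z k) := by
        simp_rw [← hcomp, Finset.sum_mul]
    _ = ∑ j, ∑ i, ∑ k, hM.eigenvectorBasis i j * hM.eigenvectorBasis i k * (x j * z k) :=
        Finset.sum_congr rfl fun j _ => Finset.sum_comm
    _ = ∑ i, ∑ j, ∑ k, hM.eigenvectorBasis i j * hM.eigenvectorBasis i k * (x j * z k) :=
        Finset.sum_comm
    _ = ∑ i, (∑ j, hM.eigenvectorBasis i j * x j) * (∑ j, hM.eigenvectorBasis i j * z j) := by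
        apply Finset.sum_congr rfl; intro i _
        rw [Finset.sum_mul_sum]
        apply Finset.sum_congr rfl; intro j _
        apply Finset.sum_congr rfl; intro k _
        ring

/-- `wᵢ ⬝ (M z) = νᵢ (wᵢ ⬝ z)` for symmetric `M`. -/
lemma my_eig_dot {M : Matrix (Fin (n+1)) (Fin (n+1)) ℝ} (hM : M.IsHermitian)
    (i : Fin (n+1)) (z : Fin (n+1) → ℝ) :
    ∑ j, hM.eigenvectorBasis i j * (M *ᵥ z) j
      = hM.eigenvalues i * ∑ j, hM.eigenvectorBasis i j * z j := by
  have hsym : ∀ j k, M j k = M k j := by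
    intro j k
    have := congrFun (congrFun hM.symm j) k
    simpa [Matrix.conjTranspose_apply] using this
  have hev := hM.mulVec_eigenvectorBasis i
  calc ∑ j, hM.eigenvectorBasis i j * (M *ᵥ z) j
      = ∑ j, ∑ k, hM.eigenvectorBasis i j * (M j k * z k) := by
        simp [Matrix.mulVec, dotProduct, Finset.mul_sum]
    _ = ∑ k, (∑ j, M k j * hM.eigenvectorBasis i j) * z k := by
        rw [Finset.sum_comm]
        apply Finset.sum_congr rfl; intro k _
        rw [Finset.sum_mul]
        apply Finset.sum_congr rfl; intro j _
        rw [hsym j k]; ring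
    _ = ∑ k, (M *ᵥ ⇑(hM.eigenvectorBasis i)) k * z k := by
        simp [Matrix.mulVec, dotProduct]
    _ = hM.eigenvalues i * ∑ j, hM.eigenvectorBasis i j * z j := by
        rw [hev, Finset.mul_sum]
        apply Finset.sum_congr rfl; intro j _
        simp; ring

/-- symmetry shift of the bilinear form -/
lemma my_dot_shift {M : Matrix (Fin (n+1)) (Fin (n+1)) ℝ} (hM : M.IsHermitian)
    (x z : Fin (n+1) → ℝ) :
    ∑ j, x j * (M *ᵥ z) j = ∑ j, z j * (M *ᵥ x) j := by
  have hsym : ∀ j k, M j k = M k j := by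
    intro j k
    have := congrFun (congrFun hM.symm j) k
    simpa [Matrix.conjTranspose_apply] using this
  calc ∑ j, x j * (M *ᵥ z) j = ∑ j, ∑ k, x j * (M j k * z k) := by
        simp [Matrix.mulVec, dotProduct, Finset.mul_sum]
    _ = ∑ k, ∑ j, z k * (M k j * x j) := by
        rw [Finset.sum_comm]
        exact Finset.sum_congr rfl fun k _ => Finset.sum_congr rfl fun j _ => by
          rw [hsym j k]; ring
    _ = ∑ j, z j * (M *ᵥ x) j := by
        simp [Matrix.mulVec, dotProduct, Finset.mul_sum]

/-- each eigenvector is a unit vector -/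
lemma my_unit_eig {M : Matrix (Fin (n+1)) (Fin (n+1)) ℝ} (hM : M.IsHermitian) (i : Fin (n+1)) :
    ∑ j, (hM.eigenvectorBasis i j)^2 = 1 := by
  have hUU : star (hM.eigenvectorUnitary : Matrix (Fin (n+1)) (Fin (n+1)) ℝ)
      * (hM.eigenvectorUnitary : Matrix (Fin (n+1)) (Fin (n+1)) ℝ) = 1 :=
    Unitary.coe_star_mul_self _
  have := congrFun (congrFun hUU i) i
  simp only [Matrix.mul_apply, Matrix.one_apply_eq, Matrix.star_apply, star_trivial,
    Matrix.IsHermitian.eigenvectorUnitary_apply] at this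
  simpa [sq] using this

/-- quadratic bound for the image vector -/
lemma my_norm_bound {M : Matrix (Fin (n+1)) (Fin (n+1)) ℝ} (hM : M.IsHermitian)
    {l : ℝ} (hb : ∀ i, hM.eigenvalues i ^ 2 ≤ l ^ 2) (x : Fin (n+1) → ℝ) :
    ∑ j, (M *ᵥ x) j ^ 2 ≤ l ^ 2 * ∑ j, x j ^ 2 := by
  have h1 : ∑ j, (M *ᵥ x) j ^ 2
      = ∑ i, (hM.eigenvalues i)^2 * (∑ j, hM.eigenvectorBasis i j * x j)^2 := by
    calc ∑ j, (M *ᵥ x) j ^ 2 = ∑ j, (M *ᵥ x) j * (M *ᵥ x) j := by simp [sq]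
      _ = ∑ i, (∑ j, hM.eigenvectorBasis i j * (M *ᵥ x) j)
            * (∑ j, hM.eigenvectorBasis i j * (M *ᵥ x) j) := my_parseval hM _ _
      _ = _ := by
          apply Finset.sum_congr rfl; intro i _
          rw [my_eig_dot hM i x]; ring
  have h2 : ∑ j, x j ^ 2 = ∑ i, (∑ j, hM.eigenvectorBasis i j * x j)^2 := by
    calc ∑ j, x j ^ 2 = ∑ j, x j * x j := by simp [sq]
      _ = ∑ i, (∑ j, hM.eigenvectorBasis i j * x j) * (∑ j, hM.eigenvectorBasis i j * x j) :=
        my_parseval hM _ _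
      _ = _ := by simp [sq]
  rw [h1, h2, Finset.mul_sum]
  exact Finset.sum_le_sum fun i _ =>
    mul_le_mul_of_nonneg_right (hb i) (sq_nonneg _)

/-- expansion of the Frobenius distance to a scaled rank one matrix -/
lemma my_expand_sq (A : Matrix (Fin (n+1)) (Fin (n+1)) ℝ) (s : ℝ) (x y : Fin (n+1) → ℝ) :
    ∑ i, ∑ j, ((A - s • vecMulVec x y) i j)^2
      = (∑ i, ∑ j, A i j^2) - 2*s*(∑ i, x i * (A *ᵥ y) i)
        + s^2 * ((∑ i, x i^2) * (∑ j, y j^2)) := by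
  have hAy : ∀ i, (A *ᵥ y) i = ∑ j, A i j * y j := fun i => by
    simp [Matrix.mulVec, dotProduct]
  rw [Finset.sum_mul_sum]
  simp only [hAy, Finset.mul_sum, Finset.sum_mul, ← Finset.sum_sub_distrib,
    ← Finset.sum_add_distrib]
  refine Finset.sum_congr rfl fun i _ => Finset.sum_congr rfl fun j _ => ?_
  simp only [Matrix.sub_apply, Matrix.smul_apply, Matrix.vecMulVec_apply, smul_eq_mul]
  ring

end Aux

/-- Let `A` be real symmetric with `λ₁(A) = -λₙ(A) > 0`.  If `u` is a unit eigenvector of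
`A²` for the eigenvalue `λ₁(A)²` which is not an eigenvector of `A`, and
`v = A u / ‖A u‖`, then `σ₁(A) u vᵀ` is a nonsymmetric best rank one approximation of `A`. -/
theorem stmt3 {n : ℕ} (A : Matrix (Fin (n + 1)) (Fin (n + 1)) ℝ) (hA : A.IsHermitian)
    (hlam : (⨆ i, hA.eigenvalues i) = -(⨅ i, hA.eigenvalues i))
    (hpos : 0 < ⨆ i, hA.eigenvalues i)
    (u : Fin (n + 1) → ℝ) (hu : uvec u)
    (heig : (A * A).mulVec u = ((⨆ i, hA.eigenvalues i) ^ 2) • u)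
    (hnot : ¬ ∃ μ : ℝ, A.mulVec u = μ • u) :
    IsBestRankOne A
        (sigma1 A •
          Matrix.vecMulVec u ((Real.sqrt (∑ i, A.mulVec u i ^ 2))⁻¹ • A.mulVec u)) ∧
      ¬ (sigma1 A •
          Matrix.vecMulVec u ((Real.sqrt (∑ i, A.mulVec u i ^ 2))⁻¹ • A.mulVec u)).IsSymm := by
  set l : ℝ := ⨆ i, hA.eigenvalues i with hl
  have hl0 : l ≠ 0 := ne_of_gt hpos
  -- eigenvalue bounds
  have hble : ∀ i, hA.eigenvalues i ^ 2 ≤ l ^ 2 := by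
    intro i
    have h1 : hA.eigenvalues i ≤ l := le_ciSup (Set.finite_range _).bddAbove i
    have h2 : -l ≤ hA.eigenvalues i := by
      rw [hlam, neg_neg]
      exact ciInf_le (Set.finite_range _).bddBelow i
    exact sq_le_sq' h2 h1
  -- norm of A u
  have hAu2 : ∑ i, (A *ᵥ u) i ^ 2 = l ^ 2 := by
    calc ∑ i, (A *ᵥ u) i ^ 2 = ∑ i, (A *ᵥ u) i * (A *ᵥ u) i := by simp [sq]
      _ = ∑ i, u i * (A *ᵥ (A *ᵥ u)) i := (my_dot_shift hA _ _)
      _ = ∑ i, u i * ((A * A) *ᵥ u) i := by rw [Matrix.mulVec_mulVec]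
      _ = ∑ i, u i * (l^2 * u i) := by rw [heig]; simp [Pi.smul_apply, smul_eq_mul]
      _ = l^2 * ∑ i, u i ^2 := by rw [Finset.mul_sum]; exact Finset.sum_congr rfl fun i _ => by ring
      _ = l^2 := by rw [hu, mul_one]
  have hsqrt : Real.sqrt (∑ i, (A *ᵥ u) i ^ 2) = l := by
    rw [hAu2]; exact Real.sqrt_sq hpos.le
  -- sigma1 A = l
  have hsig : sigma1 A = l := by
    set B := Aᵀ * A with hB
    have hBH : B.IsHermitian := isHermitian_conjTranspose_mul_self A
    have hAT : Aᵀ = A := by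
      ext j k
      have := congrFun (congrFun hA.symm j) k
      simpa [Matrix.conjTranspose_apply, Matrix.transpose_apply] using this.symm
    have hBA : B = A * A := by rw [hB, hAT]
    have hBu : B *ᵥ u = (l^2) • u := by rw [hBA]; exact heig
    have hBv : ∀ v : Fin (n+1) → ℝ, B *ᵥ v = A *ᵥ (A *ᵥ v) := by
      intro v; rw [hBA, ← Matrix.mulVec_mulVec]
    have hup : ∀ i, hBH.eigenvalues i ≤ l^2 := by
      intro i
      have hunit : ∑ j, hBH.eigenvectorBasis i j * hBH.eigenvectorBasis i j = 1 := by
        simpa [pow_two] using my_unit_eig hBH i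
      have e1 : ∑ j, hBH.eigenvectorBasis i j * (B *ᵥ fun k => hBH.eigenvectorBasis i k) j
          = hBH.eigenvalues i := by
        have h := my_eig_dot hBH i (fun k => hBH.eigenvectorBasis i k)
        rw [show (∑ j, hBH.eigenvectorBasis i j * (fun k => hBH.eigenvectorBasis i k) j)
          = 1 from hunit, mul_one] at h
        exact h
      rw [hBv] at e1
      have e3 : ∑ j, hBH.eigenvectorBasis i j * (A *ᵥ A *ᵥ fun k => hBH.eigenvectorBasis i k) j
          = ∑ j, (A *ᵥ fun k => hBH.eigenvectorBasis i k) j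
              * (A *ᵥ fun k => hBH.eigenvectorBasis i k) j :=
        my_dot_shift hA (fun k => hBH.eigenvectorBasis i k)
          (A *ᵥ fun k => hBH.eigenvectorBasis i k)
      rw [e3] at e1
      have e4 : ∑ j, (A *ᵥ fun k => hBH.eigenvectorBasis i k) j ^ 2 ≤ l ^ 2 := by
        have h := my_norm_bound hA hble (fun k => hBH.eigenvectorBasis i k)
        have h2 : (∑ j, ((fun k => hBH.eigenvectorBasis i k) j) ^ 2) = 1 := my_unit_eig hBH i
        rw [h2, mul_one] at h
        exact h
      calc hBH.eigenvalues i
          = ∑ j, (A *ᵥ fun k => hBH.eigenvectorBasis i k) j ^2 := by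
            rw [← e1]
            exact Finset.sum_congr rfl fun j _ => (pow_two _).symm
        _ ≤ l^2 := e4
    -- l^2 is attained
    have hlow : ∃ i, hBH.eigenvalues i = l^2 := by
      by_contra hcon
      push_neg at hcon
      have hc0 : ∀ i, ∑ j, hBH.eigenvectorBasis i j * u j = 0 := by
        intro i
        have h4 := my_eig_dot hBH i u
        rw [hBu] at h4
        have h5 : ∑ j, hBH.eigenvectorBasis i j * ((l^2) • u) j
            = l^2 * ∑ j, hBH.eigenvectorBasis i j * u j := by
          rw [Finset.mul_sum]
          exact Finset.sum_congr rfl fun j _ => by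
            simp [Pi.smul_apply, smul_eq_mul]; ring
        rw [h5] at h4
        have h6 : (hBH.eigenvalues i - l^2) * (∑ j, hBH.eigenvectorBasis i j * u j) = 0 := by
          linarith [h4]
        rcases mul_eq_zero.mp h6 with h | h
        · exact absurd (by linarith : hBH.eigenvalues i = l^2) (hcon i)
        · exact h
      have := my_parseval hBH u u
      simp only [hc0, mul_zero, Finset.sum_const_zero] at this
      have hu' : (1:ℝ) = 0 := by
        rw [← hu]
        calc ∑ i, u i ^2 = ∑ i, u i * u i := by simp [sq]
          _ = 0 := this
      norm_num at hu'
    have hsup : (⨆ i, hBH.eigenvalues i) = l^2 := by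
      apply le_antisymm
      · exact ciSup_le hup
      · obtain ⟨i, hi⟩ := hlow
        rw [← hi]
        exact le_ciSup (Set.finite_range _).bddAbove i
    rw [sigma1, show (⨆ i, (isHermitian_conjTranspose_mul_self A).eigenvalues i) = l^2 from hsup]
    exact Real.sqrt_sq hpos.le
  -- bilinear form bound
  have hkey : ∀ x y : Fin (n+1) → ℝ, uvec x → uvec y →
      (∑ i, x i * (A *ᵥ y) i)^2 ≤ l^2 := by
    intro x y hx hy
    have h1 : (∑ i, x i * (A *ᵥ y) i)^2 ≤ (∑ i, x i ^2) * (∑ i, (A *ᵥ y) i ^2) :=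
      Finset.sum_mul_sq_le_sq_mul_sq _ _ _
    have h2 := my_norm_bound hA hble y
    rw [hy, mul_one] at h2
    rw [hx, one_mul] at h1
    exact h1.trans h2
  -- the distinguished vector y₀
  rw [hsig] at *
  have hgoal_sqrt : Real.sqrt (∑ i, A.mulVec u i ^ 2) = l := hsqrt
  rw [hgoal_sqrt]
  set y0 : Fin (n+1) → ℝ := l⁻¹ • A.mulVec u with hy0
  have hy0u : uvec y0 := by
    show ∑ i, (l⁻¹ • A.mulVec u) i ^2 = 1
    calc ∑ i, (l⁻¹ • A.mulVec u) i ^2 = l⁻¹^2 * ∑ i, (A *ᵥ u) i ^2 := by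
          rw [Finset.mul_sum]
          exact Finset.sum_congr rfl fun i _ => by
            simp [Pi.smul_apply, smul_eq_mul]; ring
      _ = 1 := by rw [hAu2]; field_simp
  have hAy0 : A *ᵥ y0 = l • u := by
    rw [hy0, Matrix.mulVec_smul]
    have h : A *ᵥ (A *ᵥ u) = (l^2) • u := by rw [Matrix.mulVec_mulVec]; exact heig
    rw [h, smul_smul]
    congr 1
    rw [pow_two, ← mul_assoc, inv_mul_cancel₀ hl0, one_mul]
  constructor
  · constructor
    · exact ⟨l, u, y0, hu, hy0u, rfl⟩
    · intro s x y hx hy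
      unfold frob
      apply Real.sqrt_le_sqrt
      rw [my_expand_sq, my_expand_sq, hu, hy0u, hx, hy]
      have ht0 : ∑ i, u i * (A *ᵥ y0) i = l := by
        rw [hAy0]
        calc ∑ i, u i * (l • u) i = l * ∑ i, u i ^2 := by
              rw [Finset.mul_sum]
              exact Finset.sum_congr rfl fun i _ => by
                simp [Pi.smul_apply, smul_eq_mul]; ring
          _ = l := by rw [hu, mul_one]
      rw [ht0]
      have hb := hkey x y hx hy
      nlinarith [sq_nonneg (s - ∑ i, x i * (A *ᵥ y) i)]
  · intro hsym
    have hentry : ∀ i j, u i * A.mulVec u j = u j * A.mulVec u i := by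
      intro i j
      have h := congrFun (congrFun hsym j) i
      simp only [hy0, Matrix.transpose_apply, Matrix.smul_apply, Matrix.vecMulVec_apply,
        Pi.smul_apply, smul_eq_mul] at h
      have h2 := mul_left_cancel₀ hl0 h
      have h3 : l⁻¹ * (u i * A.mulVec u j) = l⁻¹ * (u j * A.mulVec u i) := by
        linear_combination h2
      exact mul_left_cancel₀ (inv_ne_zero hl0) h3
    obtain ⟨j0, hj0⟩ : ∃ j, u j ≠ 0 := by
      by_contra hc
      push_neg at hc
      have : (1:ℝ) = 0 := by rw [← hu]; simp [hc]
      norm_num at this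
    apply hnot
    refine ⟨A.mulVec u j0 / u j0, funext fun i => ?_⟩
    have h := hentry i j0
    show A.mulVec u i = (A.mulVec u j0 / u j0) * u i
    field_simp
    linear_combination -h
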